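/- arXiv:1405.6863 — 4 statements merged into one kernel-verified Lean document; each statement's English description precedes it below -/
import Mathlib

section
/- Let K, L ≥ 1 and let q^A : ℕ^K → ℝ and q^B : ℕ^L → ℝ be arbitrary functions. Fix a sample configuration (a,b,c) with c ≥ 2. Then the λ = 1 term of the Gaussian sampling formula equals q_1; that is, Σ_{r ∈ Φ_2} Σ_{ξ ∈ P₂(2)} [∏_{i=1}^K ∏_{j=1}^L binom(c_{ij}, r_{ij})] × [Σ_{I ⊆ {1} : h^A_{μ_1} = h^A_{ν_1} if 1 ∈ I} (−1)^{1−|I|} q^A(a + c_A − r_A^{(ν_I)})] × [Σ_{J ⊆ {1} : h^B_{μ_1} = h^B_{ν_1} if 1 ∈ J} (−1)^{1−|J|} q^B(b + c_B − r_B^{(ν_J)})] = binom(c,2) q^A(a+c_A) q^B(b+c_B) − q^B(b+c_B) Σ_{i=1}^K binom(c_{i·},2) q^A(a+c_A−e_i) − q^A(a+c_A) Σ_{j=1}^L binom(c_{·j},2) q^B(b+c_B−e_j) + Σ_{i=1}^K Σ_{j=1}^L binom(c_{ij},2) q^A(a+c_A−e_i) q^B(b+c_B−e_j). -/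
open scoped BigOperators

/-- `Φ₂`: the (finite) set of matrices `r ∈ ℕ^{K×L}` with total `2`. -/
noncomputable def Phi2 (K L : ℕ) : Finset (Fin K → Fin L → ℕ) :=
  (Fintype.piFinset fun _ : Fin K =>
      Fintype.piFinset fun _ : Fin L => Finset.range 3).filter
    (fun r => ∑ i, ∑ j, r i j = 2)

/-- The first-order coefficient `q₁(a,b,c)` of the asymptotic sampling formula. -/
noncomputable def q1expr {K L : ℕ} (qA : (Fin K → ℕ) → ℝ) (qB : (Fin L → ℕ) → ℝ)
    (a : Fin K → ℕ) (b : Fin L → ℕ) (c : Fin K → Fin L → ℕ) : ℝ :=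
  ((∑ i, ∑ j, c i j).choose 2 : ℝ) *
      qA (fun i => a i + ∑ j, c i j) * qB (fun j => b j + ∑ i, c i j)
    - qB (fun j => b j + ∑ i, c i j) *
        ∑ i, ((∑ j, c i j).choose 2 : ℝ) *
          qA (fun i' => a i' + ∑ j', c i' j' - if i' = i then 1 else 0)
    - qA (fun i => a i + ∑ j, c i j) *
        ∑ j, ((∑ i, c i j).choose 2 : ℝ) *
          qB (fun j' => b j' + ∑ i', c i' j' - if j' = j then 1 else 0)
    + ∑ i, ∑ j, ((c i j).choose 2 : ℝ) *
        qA (fun i' => a i' + ∑ j', c i' j' - if i' = i then 1 else 0) *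
        qB (fun j' => b j' + ∑ i', c i' j' - if j' = j then 1 else 0)


open Finset

variable {K L : ℕ}

lemma multiset_pair_eq {α : Type*} [DecidableEq α] (a b c d : α)
    (h : ({a,b} : Multiset α) = {c,d}) :
    (a = c ∧ b = d) ∨ (a = d ∧ b = c) := by
  have ha : a ∈ ({c,d} : Multiset α) := h ▸ (by simp)
  have hb : b ∈ ({c,d} : Multiset α) := h ▸ (by simp)
  have hc : c ∈ ({a,b} : Multiset α) := h ▸ (by simp)
  have hd : d ∈ ({a,b} : Multiset α) := h ▸ (by simp)
  simp at ha hb hc hd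
  have hcount := congrArg (Multiset.count b) h
  simp [Multiset.count_cons, Multiset.count_singleton] at hcount
  rcases ha with rfl | rfl
  · rcases hb with rfl | rfl
    · rcases hd with rfl | rfl <;> simp_all
    · exact Or.inl ⟨rfl, rfl⟩
  · rcases hb with rfl | rfl
    · exact Or.inr ⟨rfl, rfl⟩
    · rcases hc with rfl | rfl <;> simp_all


def emx (p q : Fin K × Fin L) : Fin K → Fin L → ℕ :=
  fun i j => (if p = (i, j) then 1 else 0) + (if q = (i, j) then 1 else 0)

lemma emx_apply (p q z : Fin K × Fin L) :
    emx p q z.1 z.2 = (if p = z then 1 else 0) + (if q = z then 1 else 0) := by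
  simp [emx]

lemma emx_count (p q z : Fin K × Fin L) :
    emx p q z.1 z.2 = Multiset.count z {p, q} := by
  rw [emx_apply]
  simp only [Multiset.insert_eq_cons, Multiset.count_cons, Multiset.count_singleton]
  rw [add_comm]
  congr 1 <;> simp [eq_comm]

lemma emx_comm (p q : Fin K × Fin L) : emx p q = emx q p := by
  funext i j; simp [emx, add_comm]

lemma emx_eq_iff (p q p' q' : Fin K × Fin L) :
    emx p q = emx p' q' ↔ (p = p' ∧ q = q') ∨ (p = q' ∧ q = p') := by
  constructor
  · intro h
    refine multiset_pair_eq p q p' q' (Multiset.ext.2 fun z => ?_)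
    have := congrFun (congrFun h z.1) z.2
    rwa [emx_count, emx_count] at this
  · rintro (⟨rfl, rfl⟩ | ⟨rfl, rfl⟩)
    · rfl
    · exact emx_comm _ _

lemma sum_indicator (p : Fin K × Fin L) :
    (∑ i, ∑ j, if p = (i, j) then (1:ℕ) else 0) = 1 := by
  rw [← Fintype.sum_prod_type (f := fun z : Fin K × Fin L => if p = z then (1:ℕ) else 0)]
  simp

lemma emx_sum (p q : Fin K × Fin L) : ∑ i, ∑ j, emx p q i j = 2 := by
  simp only [emx, Finset.sum_add_distrib, sum_indicator]

lemma emx_mem_Phi2 (p q : Fin K × Fin L) : emx p q ∈ Phi2 K L := by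
  rw [Phi2, Finset.mem_filter]
  refine ⟨?_, emx_sum p q⟩
  rw [Fintype.mem_piFinset]
  intro i
  rw [Fintype.mem_piFinset]
  intro j
  rw [Finset.mem_range, emx]
  split_ifs <;> omega

lemma prod_choose (c : Fin K → Fin L → ℕ) (p q : Fin K × Fin L) :
    (∏ i, ∏ j, ((c i j).choose (emx p q i j) : ℝ)) =
      if p = q then ((c p.1 p.2).choose 2 : ℝ)
      else (c p.1 p.2 : ℝ) * c q.1 q.2 := by
  rw [← Fintype.prod_prod_type
    (f := fun z : Fin K × Fin L => ((c z.1 z.2).choose (emx p q z.1 z.2) : ℝ))]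
  by_cases hpq : p = q
  · subst hpq
    rw [if_pos rfl]
    rw [Finset.prod_eq_single p]
    · rw [emx_apply, if_pos rfl]
    · intro z _ hz
      rw [emx_apply, if_neg (fun h => hz h.symm)]
      simp
    · simp
  · rw [if_neg hpq]
    have h1 : ∏ z : Fin K × Fin L, ((c z.1 z.2).choose (emx p q z.1 z.2) : ℝ)
        = ∏ z ∈ ({p, q} : Finset (Fin K × Fin L)),
            ((c z.1 z.2).choose (emx p q z.1 z.2) : ℝ) := by
      refine (Finset.prod_subset (Finset.subset_univ _) fun z _ hz => ?_).symm
      simp only [Finset.mem_insert, Finset.mem_singleton, not_or] at hz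
      rw [emx_apply, if_neg (fun h => hz.1 h.symm), if_neg (fun h => hz.2 h.symm)]
      simp
    rw [h1, Finset.prod_pair hpq, emx_apply, emx_apply,
      if_pos rfl, if_pos rfl, if_neg hpq, if_neg (fun h => hpq h.symm)]
    simp

lemma pull_ite {β : Type*} [AddCommMonoid β] {ι : Type*} (c : Prop) [Decidable c]
    (s : Finset ι) (F : ι → β) :
    (∑ l ∈ s, if c then F l else 0) = if c then ∑ l ∈ s, F l else 0 := by
  split_ifs <;> simp

lemma sub0 (u : Fin K → Fin L → ℝ) :
    ∑ p : Fin K × Fin L, ∑ q : Fin K × Fin L,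
      (u p.1 p.2 * u q.1 q.2 - if p = q then u p.1 p.2 else 0)
    = (∑ i, ∑ j, u i j)^2 - ∑ i, ∑ j, u i j := by
  have e1 : ∀ p : Fin K × Fin L,
      (∑ q : Fin K × Fin L, (u p.1 p.2 * u q.1 q.2 - if p = q then u p.1 p.2 else 0))
      = u p.1 p.2 * (∑ i, ∑ j, u i j) - u p.1 p.2 := by
    intro p
    rw [Finset.sum_sub_distrib, ← Finset.mul_sum, Finset.sum_ite_eq,
      ← Fintype.sum_prod_type (f := fun z : Fin K × Fin L => u z.1 z.2)]
    simp
  simp only [e1]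
  rw [Finset.sum_sub_distrib, ← Finset.sum_mul,
    ← Fintype.sum_prod_type (f := fun z : Fin K × Fin L => u z.1 z.2)]
  ring

lemma sub1 (u : Fin K → Fin L → ℝ) (QA : Fin K → ℝ) :
    ∑ p : Fin K × Fin L, ∑ q : Fin K × Fin L,
      (u p.1 p.2 * u q.1 q.2 - if p = q then u p.1 p.2 else 0) *
        (if p.1 = q.1 then QA q.1 else 0)
    = ∑ i, ((∑ j, u i j)^2 - ∑ j, u i j) * QA i := by
  have e1 : ∀ p : Fin K × Fin L,
      (∑ q : Fin K × Fin L, (u p.1 p.2 * u q.1 q.2 - if p = q then u p.1 p.2 else 0) *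
        (if p.1 = q.1 then QA q.1 else 0))
      = QA p.1 * (u p.1 p.2 * (∑ l, u p.1 l) - u p.1 p.2) := by
    intro p
    rw [Fintype.sum_prod_type]
    have h1 : ∀ (k : Fin K) (l : Fin L),
        (u p.1 p.2 * u k l - if p = (k, l) then u p.1 p.2 else 0) *
          (if p.1 = k then QA k else 0)
        = if p.1 = k then
            QA k * (u p.1 p.2 * u k l - if p = (k, l) then u p.1 p.2 else 0) else 0 := by
      intro k l; split_ifs <;> ring
    simp only [h1, pull_ite, Finset.sum_ite_eq, Finset.mem_univ, if_true]
    have h2 : ∀ l, (if p = (p.1, l) then u p.1 p.2 else 0)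
        = if p.2 = l then u p.1 p.2 else 0 := by
      intro l
      have hiff : p = (p.1, l) ↔ p.2 = l :=
        ⟨fun h => (Prod.ext_iff.1 h).2, fun h => Prod.ext_iff.2 ⟨rfl, h⟩⟩
      simp only [hiff]
    rw [← Finset.mul_sum, Finset.sum_sub_distrib, ← Finset.mul_sum]
    simp only [h2, Finset.sum_ite_eq, Finset.mem_univ, if_true]
  simp only [e1]
  rw [Fintype.sum_prod_type]
  refine Finset.sum_congr rfl fun i _ => ?_
  have : ∀ j, QA i * (u i j * (∑ l, u i l) - u i j)
      = u i j * ((∑ l, u i l) * QA i) - u i j * QA i := by intro j; ring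
  simp only [this]
  rw [Finset.sum_sub_distrib, ← Finset.sum_mul, ← Finset.sum_mul]
  ring

lemma sub2 (u : Fin K → Fin L → ℝ) (QB : Fin L → ℝ) :
    ∑ p : Fin K × Fin L, ∑ q : Fin K × Fin L,
      (u p.1 p.2 * u q.1 q.2 - if p = q then u p.1 p.2 else 0) *
        (if p.2 = q.2 then QB q.2 else 0)
    = ∑ j, ((∑ i, u i j)^2 - ∑ i, u i j) * QB j := by
  have e1 : ∀ p : Fin K × Fin L,
      (∑ q : Fin K × Fin L, (u p.1 p.2 * u q.1 q.2 - if p = q then u p.1 p.2 else 0) *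
        (if p.2 = q.2 then QB q.2 else 0))
      = QB p.2 * (u p.1 p.2 * (∑ k, u k p.2) - u p.1 p.2) := by
    intro p
    rw [Fintype.sum_prod_type]
    have h1 : ∀ (k : Fin K) (l : Fin L),
        (u p.1 p.2 * u k l - if p = (k, l) then u p.1 p.2 else 0) *
          (if p.2 = l then QB l else 0)
        = if p.2 = l then
            QB l * (u p.1 p.2 * u k l - if p = (k, l) then u p.1 p.2 else 0) else 0 := by
      intro k l; split_ifs <;> ring
    simp only [h1, Finset.sum_ite_eq, Finset.mem_univ, if_true]
    have h2 : ∀ k, (if p = (k, p.2) then u p.1 p.2 else 0)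
        = if p.1 = k then u p.1 p.2 else 0 := by
      intro k
      have hiff : p = (k, p.2) ↔ p.1 = k :=
        ⟨fun h => (Prod.ext_iff.1 h).1, fun h => Prod.ext_iff.2 ⟨h, rfl⟩⟩
      simp only [hiff]
    rw [← Finset.mul_sum, Finset.sum_sub_distrib, ← Finset.mul_sum]
    simp only [h2, Finset.sum_ite_eq, Finset.mem_univ, if_true]
  simp only [e1]
  rw [Fintype.sum_prod_type, Finset.sum_comm]
  refine Finset.sum_congr rfl fun j _ => ?_
  have : ∀ i, QB j * (u i j * (∑ k, u k j) - u i j)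
      = u i j * ((∑ k, u k j) * QB j) - u i j * QB j := by intro i; ring
  simp only [this]
  rw [Finset.sum_sub_distrib, ← Finset.sum_mul, ← Finset.sum_mul]
  ring

lemma sub3 (u : Fin K → Fin L → ℝ) (QA : Fin K → ℝ) (QB : Fin L → ℝ) :
    ∑ p : Fin K × Fin L, ∑ q : Fin K × Fin L,
      (u p.1 p.2 * u q.1 q.2 - if p = q then u p.1 p.2 else 0) *
        (if p.1 = q.1 then QA q.1 else 0) * (if p.2 = q.2 then QB q.2 else 0)
    = ∑ i, ∑ j, ((u i j)^2 - u i j) * QA i * QB j := by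
  have e1 : ∀ p : Fin K × Fin L,
      (∑ q : Fin K × Fin L, (u p.1 p.2 * u q.1 q.2 - if p = q then u p.1 p.2 else 0) *
        (if p.1 = q.1 then QA q.1 else 0) * (if p.2 = q.2 then QB q.2 else 0))
      = ((u p.1 p.2)^2 - u p.1 p.2) * QA p.1 * QB p.2 := by
    intro p
    rw [Fintype.sum_prod_type]
    have h1 : ∀ (k : Fin K) (l : Fin L),
        (u p.1 p.2 * u k l - if p = (k, l) then u p.1 p.2 else 0) *
          (if p.1 = k then QA k else 0) * (if p.2 = l then QB l else 0)
        = if p.1 = k then (if p.2 = l then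
            (u p.1 p.2 * u k l - if p = (k, l) then u p.1 p.2 else 0) * QA k * QB l
            else 0) else 0 := by
      intro k l; split_ifs <;> ring
    simp only [h1, Finset.sum_ite_eq, Finset.mem_univ, if_true, pull_ite]
    ring
  simp only [e1]
  rw [Fintype.sum_prod_type]

lemma stepB (u : Fin K → Fin L → ℝ) (QA : Fin K → ℝ) (QB : Fin L → ℝ) (Q R : ℝ) :
    ∑ p : Fin K × Fin L, ∑ q : Fin K × Fin L,
      (u p.1 p.2 * u q.1 q.2 - if p = q then u p.1 p.2 else 0) *
        ((if p.1 = q.1 then QA q.1 else 0) - Q) *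
        ((if p.2 = q.2 then QB q.2 else 0) - R)
    = (∑ i, ∑ j, ((u i j)^2 - u i j) * QA i * QB j)
      - R * ∑ i, ((∑ j, u i j)^2 - ∑ j, u i j) * QA i
      - Q * ∑ j, ((∑ i, u i j)^2 - ∑ i, u i j) * QB j
      + ((∑ i, ∑ j, u i j)^2 - ∑ i, ∑ j, u i j) * Q * R := by
  have key : ∀ p q : Fin K × Fin L,
      (u p.1 p.2 * u q.1 q.2 - if p = q then u p.1 p.2 else 0) *
        ((if p.1 = q.1 then QA q.1 else 0) - Q) *
        ((if p.2 = q.2 then QB q.2 else 0) - R)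
      = (u p.1 p.2 * u q.1 q.2 - if p = q then u p.1 p.2 else 0) *
          (if p.1 = q.1 then QA q.1 else 0) * (if p.2 = q.2 then QB q.2 else 0)
        - ((u p.1 p.2 * u q.1 q.2 - if p = q then u p.1 p.2 else 0) *
            (if p.1 = q.1 then QA q.1 else 0)) * R
        - ((u p.1 p.2 * u q.1 q.2 - if p = q then u p.1 p.2 else 0) *
            (if p.2 = q.2 then QB q.2 else 0)) * Q
        + (u p.1 p.2 * u q.1 q.2 - if p = q then u p.1 p.2 else 0) * (Q * R) := by
    intro p q; ring
  have s2 : ∑ p : Fin K × Fin L, ∑ q : Fin K × Fin L,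
      (if p = q then u p.1 p.2 else 0) = ∑ i, ∑ j, u i j := by
    simp only [Finset.sum_ite_eq, Finset.mem_univ, if_true]
    exact Fintype.sum_prod_type _
  have s1 : ∑ p : Fin K × Fin L, ∑ q : Fin K × Fin L, u p.1 p.2 * u q.1 q.2
      = (∑ i, ∑ j, u i j)^2 := by
    simp only [← Finset.mul_sum]
    rw [← Finset.sum_mul, ← Fintype.sum_prod_type (f := fun z : Fin K × Fin L => u z.1 z.2)]
    ring
  simp only [key, Finset.sum_add_distrib, Finset.sum_sub_distrib, ← Finset.sum_mul]
  rw [sub1, sub2, sub3, s1, s2]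
  ring

noncomputable def gfun (qA : (Fin K → ℕ) → ℝ) (qB : (Fin L → ℕ) → ℝ)
    (a : Fin K → ℕ) (b : Fin L → ℕ) (c : Fin K → Fin L → ℕ)
    (p q : Fin K × Fin L) : ℝ :=
  ((c p.1 p.2 : ℝ) * (c q.1 q.2 : ℝ) - if p = q then (c p.1 p.2 : ℝ) else 0) *
    ((if p.1 = q.1 then
        qA (fun i' => a i' + ∑ j', c i' j' - if i' = q.1 then 1 else 0) else 0)
      - qA (fun i => a i + ∑ j, c i j)) *
    ((if p.2 = q.2 then
        qB (fun j' => b j' + ∑ i', c i' j' - if j' = q.2 then 1 else 0) else 0)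
      - qB (fun j => b j + ∑ i, c i j))

lemma flipA (qA : (Fin K → ℕ) → ℝ) (a : Fin K → ℕ) (c : Fin K → Fin L → ℕ) (k : Fin K) :
    qA (fun i => a i + ∑ j, c i j - if k = i then 1 else 0)
      = qA (fun i' => a i' + ∑ j', c i' j' - if i' = k then 1 else 0) := by
  congr 1; funext i; congr 1
  rcases eq_or_ne i k with rfl | h
  · simp
  · rw [if_neg h, if_neg (fun hh => h hh.symm)]

lemma flipB (qB : (Fin L → ℕ) → ℝ) (b : Fin L → ℕ) (c : Fin K → Fin L → ℕ) (l : Fin L) :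
    qB (fun j => b j + ∑ i, c i j - if l = j then 1 else 0)
      = qB (fun j' => b j' + ∑ i', c i' j' - if j' = l then 1 else 0) := by
  congr 1; funext j; congr 1
  rcases eq_or_ne j l with rfl | h
  · simp
  · rw [if_neg h, if_neg (fun hh => h hh.symm)]

lemma gfun_comm (qA : (Fin K → ℕ) → ℝ) (qB : (Fin L → ℕ) → ℝ)
    (a : Fin K → ℕ) (b : Fin L → ℕ) (c : Fin K → Fin L → ℕ)
    (p q : Fin K × Fin L) :
    gfun qA qB a b c q p = gfun qA qB a b c p q := by
  unfold gfun
  have hW : ((c q.1 q.2 : ℝ) * (c p.1 p.2 : ℝ) - if q = p then (c q.1 q.2 : ℝ) else 0)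
      = ((c p.1 p.2 : ℝ) * (c q.1 q.2 : ℝ) - if p = q then (c p.1 p.2 : ℝ) else 0) := by
    rcases eq_or_ne p q with rfl | h
    · simp
    · rw [if_neg h, if_neg h.symm]; ring
  have hX : (if q.1 = p.1 then
        qA (fun i' => a i' + ∑ j', c i' j' - if i' = p.1 then 1 else 0) else 0)
      = (if p.1 = q.1 then
        qA (fun i' => a i' + ∑ j', c i' j' - if i' = q.1 then 1 else 0) else 0) := by
    rcases eq_or_ne p.1 q.1 with h | h
    · rw [if_pos h.symm, if_pos h, h]
    · rw [if_neg h.symm, if_neg h]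
  have hY : (if q.2 = p.2 then
        qB (fun j' => b j' + ∑ i', c i' j' - if j' = p.2 then 1 else 0) else 0)
      = (if p.2 = q.2 then
        qB (fun j' => b j' + ∑ i', c i' j' - if j' = q.2 then 1 else 0) else 0) := by
    rcases eq_or_ne p.2 q.2 with h | h
    · rw [if_pos h.symm, if_pos h, h]
    · rw [if_neg h.symm, if_neg h]
  rw [hW, hX, hY]

lemma perpair (qA : (Fin K → ℕ) → ℝ) (qB : (Fin L → ℕ) → ℝ)
    (a : Fin K → ℕ) (b : Fin L → ℕ) (c : Fin K → Fin L → ℕ)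
    (p q : Fin K × Fin L) :
    (∏ i, ∏ j, ((c i j).choose (emx p q i j) : ℝ)) *
      ((if p.1 = q.1 then
          qA (fun i => a i + ∑ j, c i j - if q.1 = i then 1 else 0) else 0)
        - qA (fun i => a i + ∑ j, c i j)) *
      ((if p.2 = q.2 then
          qB (fun j => b j + ∑ i, c i j - if q.2 = j then 1 else 0) else 0)
        - qB (fun j => b j + ∑ i, c i j))
    = ∑ z ∈ ({(p, q), (q, p)} : Finset ((Fin K × Fin L) × (Fin K × Fin L))),
        (1/2 : ℝ) * gfun qA qB a b c z.1 z.2 := by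
  rw [prod_choose, flipA qA a c q.1, flipB qB b c q.2]
  rcases eq_or_ne p q with rfl | hpq
  · rw [if_pos rfl]
    have hset : ({(p, p), (p, p)} : Finset ((Fin K × Fin L) × (Fin K × Fin L)))
        = {(p, p)} := by simp
    rw [hset, Finset.sum_singleton]
    simp only [gfun, eq_self_iff_true, if_true]
    rw [Nat.cast_choose_two]
    ring
  · rw [if_neg hpq]
    have hne : ((p, q) : (Fin K × Fin L) × (Fin K × Fin L)) ≠ (q, p) := by
      intro h
      exact hpq (congrArg Prod.fst h)
    rw [Finset.sum_pair hne]
    dsimp only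
    nth_rewrite 2 [gfun_comm]
    simp only [gfun]
    rw [if_neg hpq]
    ring

/-- The `λ = 1` term of the Gaussian sampling formula equals `q₁(a,b,c)`, for
arbitrary functions `q^A`, `q^B`.  The unique partition of `{1,2}` is
`{{μ₁,ν₁}} = {{1,2}}`; for each `r ∈ Φ₂`, `H r` is a fixed list of two haplotypes
with multiplicity matrix `r`; the brackets are the explicit two-term sums over
`I ⊆ {1}` and `J ⊆ {1}`. -/
theorem lambda_one_term_eq_q1 (K L : ℕ) (hK : 1 ≤ K) (hL : 1 ≤ L)
    (qA : (Fin K → ℕ) → ℝ) (qB : (Fin L → ℕ) → ℝ)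
    (a : Fin K → ℕ) (b : Fin L → ℕ) (c : Fin K → Fin L → ℕ)
    (hc : 2 ≤ ∑ i, ∑ j, c i j)
    (H : (Fin K → Fin L → ℕ) → Fin 2 → Fin K × Fin L)
    (hH : ∀ r, ∑ i, ∑ j, r i j = 2 →
      ∀ i j, (Finset.univ.filter (fun α => H r α = (i, j))).card = r i j) :
    (∑ r ∈ Phi2 K L,
        (∏ i, ∏ j, ((c i j).choose (r i j) : ℝ)) *
          ((if (H r 0).1 = (H r 1).1 then
              qA (fun i => a i + ∑ j, c i j - if (H r 1).1 = i then 1 else 0)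
            else 0) - qA (fun i => a i + ∑ j, c i j)) *
          ((if (H r 0).2 = (H r 1).2 then
              qB (fun j => b j + ∑ i, c i j - if (H r 1).2 = j then 1 else 0)
            else 0) - qB (fun j => b j + ∑ i, c i j)))
      = q1expr qA qB a b c := by
  have hsum : ∀ r ∈ Phi2 K L,
      (∏ i, ∏ j, ((c i j).choose (r i j) : ℝ)) *
          ((if (H r 0).1 = (H r 1).1 then
              qA (fun i => a i + ∑ j, c i j - if (H r 1).1 = i then 1 else 0)
            else 0) - qA (fun i => a i + ∑ j, c i j)) *
          ((if (H r 0).2 = (H r 1).2 then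
              qB (fun j => b j + ∑ i, c i j - if (H r 1).2 = j then 1 else 0)
            else 0) - qB (fun j => b j + ∑ i, c i j))
      = ∑ z ∈ Finset.univ.filter
            (fun z : (Fin K × Fin L) × (Fin K × Fin L) => emx z.1 z.2 = r),
          (1/2 : ℝ) * gfun qA qB a b c z.1 z.2 := by
    intro r hr
    obtain ⟨-, hr2⟩ := Finset.mem_filter.mp hr
    set p := H r 0 with hp
    set q := H r 1 with hq
    have hrem : r = emx p q := by
      funext i j
      have h := hH r hr2 i j
      rw [Finset.card_filter, Fin.sum_univ_two] at h
      simp only [emx]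
      rw [← hp, ← hq] at h
      exact h.symm
    have hfib : Finset.univ.filter
          (fun z : (Fin K × Fin L) × (Fin K × Fin L) => emx z.1 z.2 = r)
        = {(p, q), (q, p)} := by
      ext z
      simp only [Finset.mem_filter, Finset.mem_univ, true_and, Finset.mem_insert,
        Finset.mem_singleton, hrem, emx_eq_iff, Prod.ext_iff]
    rw [hfib, hrem]
    exact perpair qA qB a b c p q
  rw [Finset.sum_congr rfl hsum,
    Finset.sum_fiberwise_of_maps_to (fun z _ => emx_mem_Phi2 z.1 z.2)
      (fun z : (Fin K × Fin L) × (Fin K × Fin L) => (1/2 : ℝ) * gfun qA qB a b c z.1 z.2)]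
  rw [Fintype.sum_prod_type]
  dsimp only
  simp only [← Finset.mul_sum]
  have hB := stepB (K := K) (L := L) (fun i j => (c i j : ℝ))
    (fun k => qA (fun i' => a i' + ∑ j', c i' j' - if i' = k then 1 else 0))
    (fun l => qB (fun j' => b j' + ∑ i', c i' j' - if j' = l then 1 else 0))
    (qA (fun i => a i + ∑ j, c i j)) (qB (fun j => b j + ∑ i, c i j))
  simp only [gfun]
  rw [hB]
  have hS : ((∑ i, ∑ j, c i j).choose 2 : ℝ)
      = 1/2 * ((∑ i, ∑ j, (c i j : ℝ))^2 - ∑ i, ∑ j, (c i j : ℝ)) := by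
    rw [Nat.cast_choose_two]; push_cast; ring
  have hA2 : ∑ i, ((∑ j, c i j).choose 2 : ℝ) *
        qA (fun i' => a i' + ∑ j', c i' j' - if i' = i then 1 else 0)
      = 1/2 * ∑ i, ((∑ j, (c i j : ℝ))^2 - ∑ j, (c i j : ℝ)) *
        qA (fun i' => a i' + ∑ j', c i' j' - if i' = i then 1 else 0) := by
    rw [Finset.mul_sum]
    refine Finset.sum_congr rfl fun i _ => ?_
    rw [Nat.cast_choose_two]; push_cast; ring
  have hB2 : ∑ j, ((∑ i, c i j).choose 2 : ℝ) *
        qB (fun j' => b j' + ∑ i', c i' j' - if j' = j then 1 else 0)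
      = 1/2 * ∑ j, ((∑ i, (c i j : ℝ))^2 - ∑ i, (c i j : ℝ)) *
        qB (fun j' => b j' + ∑ i', c i' j' - if j' = j then 1 else 0) := by
    rw [Finset.mul_sum]
    refine Finset.sum_congr rfl fun j _ => ?_
    rw [Nat.cast_choose_two]; push_cast; ring
  have hAB2 : ∑ i, ∑ j, ((c i j).choose 2 : ℝ) *
        qA (fun i' => a i' + ∑ j', c i' j' - if i' = i then 1 else 0) *
        qB (fun j' => b j' + ∑ i', c i' j' - if j' = j then 1 else 0)
      = 1/2 * ∑ i, ∑ j, ((c i j : ℝ)^2 - (c i j : ℝ)) *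
        qA (fun i' => a i' + ∑ j', c i' j' - if i' = i then 1 else 0) *
        qB (fun j' => b j' + ∑ i', c i' j' - if j' = j then 1 else 0) := by
    rw [Finset.mul_sum]
    refine Finset.sum_congr rfl fun i _ => ?_
    rw [Finset.mul_sum]
    refine Finset.sum_congr rfl fun j _ => ?_
    rw [Nat.cast_choose_two]; push_cast; ring
  rw [q1expr, hS, hA2, hB2, hAB2]
  ring
end

section
/- In the two-locus Moran model with generator G, for every N ≥ 1, every z ∈ ℕ^{K×L} with Σ_{ij} z_{ij} = N, and every (u,v) ∈ [K]×[L], the generator applied to the coordinate function z ↦ z_{uv} satisfies exactly: G(z ↦ z_{uv})(z) = N[ (θ_A/2) Σ_{k=1}^K (P^A_{ku} − δ_{ku}) z_{kv}/N + (θ_B/2) Σ_{l=1}^L (P^B_{lv} − δ_{lv}) z_{ul}/N + (ρ/2)( (z_{u·}/N)(z_{·v}/N) − z_{uv}/N ) ]. -/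
open scoped BigOperators
set_option maxHeartbeats 1000000

/-- Transition rate of the two-locus Moran model: the rate at which a haplotype
`(i,j)` dies and is replaced by a haplotype `(k,l)` when the configuration is `z`. -/
noncomputable def moranRate (N K L : ℕ) (θA θB ρ : ℝ)
    (PA : Fin K → Fin K → ℝ) (PB : Fin L → Fin L → ℝ)
    (z : Fin K → Fin L → ℕ) (i : Fin K) (j : Fin L) (k : Fin K) (l : Fin L) : ℝ :=
  ((z i j : ℝ) / N) *
    (((N : ℝ) ^ 2 / 2) * ((z k l : ℝ) / N)
      + (N : ℝ) * (θA / 2 * PA i k * (if j = l then 1 else 0)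
          + θB / 2 * PB j l * (if i = k then 1 else 0)
          + ρ / 2 * ((∑ l', (z k l' : ℝ)) / N) * ((∑ k', (z k' l : ℝ)) / N)))

/-- The configuration `z − e_{ij} + e_{kl}`. -/
def moranUpdate {K L : ℕ} (z : Fin K → Fin L → ℕ)
    (i : Fin K) (j : Fin L) (k : Fin K) (l : Fin L) : Fin K → Fin L → ℕ :=
  fun i' j' => z i' j' - (if i' = i ∧ j' = j then 1 else 0)
    + (if i' = k ∧ j' = l then 1 else 0)

/-- Generator of the two-locus Moran model acting on `f : ℕ^{K×L} → ℝ`. -/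
noncomputable def moranGen (N K L : ℕ) (θA θB ρ : ℝ)
    (PA : Fin K → Fin K → ℝ) (PB : Fin L → Fin L → ℝ)
    (f : (Fin K → Fin L → ℕ) → ℝ) (z : Fin K → Fin L → ℕ) : ℝ :=
  ∑ i, ∑ j, ∑ k, ∑ l,
    moranRate N K L θA θB ρ PA PB z i j k l * (f (moranUpdate z i j k l) - f z)

/-- The increment of the coordinate function under `moranUpdate` is exactly the
difference of indicators (nonzero-rate configurations only). -/
lemma moran_key (N K L : ℕ) (θA θB ρ : ℝ) (PA : Fin K → Fin K → ℝ) (PB : Fin L → Fin L → ℝ)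
    (z : Fin K → Fin L → ℕ) (i : Fin K) (j : Fin L) (k : Fin K) (l : Fin L)
    (u : Fin K) (v : Fin L) :
    moranRate N K L θA θB ρ PA PB z i j k l * ((moranUpdate z i j k l u v : ℝ) - (z u v : ℝ))
      = moranRate N K L θA θB ρ PA PB z i j k l *
        ((if k = u ∧ l = v then 1 else 0) - (if i = u ∧ j = v then 1 else 0)) := by
  rcases Nat.eq_zero_or_pos (z i j) with h | h
  · simp [moranRate, h]
  · congr 1
    unfold moranUpdate
    by_cases h1 : u = i ∧ v = j <;> by_cases h2 : u = k ∧ v = l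
    · obtain ⟨hi, hj⟩ := h1; obtain ⟨hk, hl⟩ := h2
      subst hi; subst hj; subst hk; subst hl
      simp [Nat.sub_add_cancel h]
    · obtain ⟨hi, hj⟩ := h1; subst hi; subst hj
      have h2' : ¬ (k = u ∧ l = v) := fun ⟨a, b⟩ => h2 ⟨a.symm, b.symm⟩
      simp [h2, h2', Nat.cast_sub h]
    · obtain ⟨hk, hl⟩ := h2; subst hk; subst hl
      have h1' : ¬ (i = u ∧ j = v) := fun ⟨a, b⟩ => h1 ⟨a.symm, b.symm⟩
      simp [h1, h1']
    · have h1' : ¬ (i = u ∧ j = v) := fun ⟨a, b⟩ => h1 ⟨a.symm, b.symm⟩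
      have h2' : ¬ (k = u ∧ l = v) := fun ⟨a, b⟩ => h2 ⟨a.symm, b.symm⟩
      simp [h1, h2, h1', h2']

/-- Exact action of the Moran generator on the haplotype-count coordinate
`z ↦ z_{uv}`. -/
theorem moranGen_coord (N K L : ℕ) (hN : 1 ≤ N) (hK : 1 ≤ K) (hL : 1 ≤ L)
    (θA θB ρ : ℝ) (hθA : 0 ≤ θA) (hθB : 0 ≤ θB) (hρ : 0 ≤ ρ)
    (PA : Fin K → Fin K → ℝ) (PB : Fin L → Fin L → ℝ)
    (hPA : (∀ i k, 0 ≤ PA i k) ∧ ∀ i, ∑ k, PA i k = 1)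
    (hPB : (∀ j l, 0 ≤ PB j l) ∧ ∀ j, ∑ l, PB j l = 1)
    (z : Fin K → Fin L → ℕ) (hz : ∑ i, ∑ j, z i j = N)
    (u : Fin K) (v : Fin L) :
    moranGen N K L θA θB ρ PA PB (fun z' => (z' u v : ℝ)) z
      = (N : ℝ) * (θA / 2 * ∑ k, (PA k u - if k = u then 1 else 0) * ((z k v : ℝ) / N)
          + θB / 2 * ∑ l, (PB l v - if l = v then 1 else 0) * ((z u l : ℝ) / N)
          + ρ / 2 * (((∑ l, (z u l : ℝ)) / N) * ((∑ k, (z k v : ℝ)) / N)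
              - (z u v : ℝ) / N)) := by
  have hN0 : (N : ℝ) ≠ 0 := by positivity
  have hzR : ∑ i, ∑ j, (z i j : ℝ) = (N : ℝ) := by exact_mod_cast hz
  have hzC : ∑ l, ∑ k, (z k l : ℝ) = (N : ℝ) := by rw [Finset.sum_comm]; exact hzR
  -- reduce the generator to a difference of two double sums of rates
  have hgen : moranGen N K L θA θB ρ PA PB (fun z' => (z' u v : ℝ)) z
      = (∑ i, ∑ j, moranRate N K L θA θB ρ PA PB z i j u v)
        - ∑ k, ∑ l, moranRate N K L θA θB ρ PA PB z u v k l := by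
    simp only [moranGen]
    simp only [moran_key]
    simp only [mul_sub, Finset.sum_sub_distrib]
    congr 1
    · refine Finset.sum_congr rfl fun i _ => Finset.sum_congr rfl fun j _ => ?_
      simp [ite_and, mul_ite, Finset.sum_ite_eq']
    · simp only [← Finset.sum_mul]
      simp [ite_and, mul_ite, ite_mul, Finset.sum_ite_eq']
  rw [hgen]
  -- inflow sum
  have A : (∑ i, ∑ j, moranRate N K L θA θB ρ PA PB z i j u v)
      = (N : ℝ)/2 * (z u v : ℝ)
        + θA/2 * (∑ i, PA i u * (z i v : ℝ))
        + θB/2 * (∑ j, PB j v * (z u j : ℝ))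
        + ρ/2 * (∑ l', (z u l' : ℝ)) * (∑ k', (z k' v : ℝ)) / N := by
    have step : ∀ i j, moranRate N K L θA θB ρ PA PB z i j u v
        = (z i j : ℝ) * ((z u v : ℝ)/2
              + ρ/2 * (∑ l', (z u l' : ℝ)) * (∑ k', (z k' v : ℝ)) / (N:ℝ)^2)
          + (if j = v then θA/2 * PA i u * (z i j : ℝ) else 0)
          + (if i = u then θB/2 * PB j v * (z i j : ℝ) else 0) := by
      intro i j
      rw [moranRate]
      generalize (∑ l', (z u l' : ℝ)) = Su
      generalize (∑ k', (z k' v : ℝ)) = Sv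
      by_cases h1 : j = v <;> by_cases h2 : i = u
      · simp only [h1, h2, eq_self_iff_true, if_true, mul_one]
        field_simp; ring
      · simp only [h1, eq_self_iff_true, if_true, if_neg h2, mul_one, mul_zero,
          add_zero, zero_add]
        field_simp; ring
      · simp only [h2, eq_self_iff_true, if_true, if_neg h1, mul_one, mul_zero,
          add_zero, zero_add]
        field_simp; ring
      · simp only [if_neg h1, if_neg h2, mul_zero, add_zero, zero_add]
        field_simp
    simp only [step, Finset.sum_add_distrib]
    have t1 : ∑ i, ∑ j, (z i j : ℝ) * ((z u v : ℝ)/2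
          + ρ/2 * (∑ l', (z u l' : ℝ)) * (∑ k', (z k' v : ℝ)) / (N:ℝ)^2)
        = (N:ℝ) * ((z u v : ℝ)/2
          + ρ/2 * (∑ l', (z u l' : ℝ)) * (∑ k', (z k' v : ℝ)) / (N:ℝ)^2) := by
      simp only [← Finset.sum_mul]; rw [hzR]
    have t2 : ∑ i, ∑ j, (if j = v then θA/2 * PA i u * (z i j : ℝ) else 0)
        = ∑ i, θA/2 * PA i u * (z i v : ℝ) := by
      simp [Finset.sum_ite_eq']
    have t3 : ∑ i, ∑ j, (if i = u then θB/2 * PB j v * (z i j : ℝ) else 0)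
        = ∑ j, θB/2 * PB j v * (z u j : ℝ) := by
      rw [Finset.sum_comm]
      simp [Finset.sum_ite_eq']
    have r2 : ∑ i, θA/2 * PA i u * (z i v : ℝ) = θA/2 * ∑ i, PA i u * (z i v : ℝ) := by
      rw [Finset.mul_sum]; exact Finset.sum_congr rfl fun _ _ => by ring
    have r3 : ∑ j, θB/2 * PB j v * (z u j : ℝ) = θB/2 * ∑ j, PB j v * (z u j : ℝ) := by
      rw [Finset.mul_sum]; exact Finset.sum_congr rfl fun _ _ => by ring
    rw [t1, t2, t3, r2, r3]
    generalize (∑ l', (z u l' : ℝ)) = Su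
    generalize (∑ k', (z k' v : ℝ)) = Sv
    generalize (∑ i, PA i u * (z i v : ℝ)) = SA
    generalize (∑ j, PB j v * (z u j : ℝ)) = SB
    field_simp
    ring
  -- outflow sum
  have B : (∑ k, ∑ l, moranRate N K L θA θB ρ PA PB z u v k l)
      = (z u v : ℝ) * ((N:ℝ)/2 + θA/2 + θB/2 + ρ/2) := by
    have step : ∀ k l, moranRate N K L θA θB ρ PA PB z u v k l
        = (z u v : ℝ)/2 * (z k l : ℝ)
          + (if v = l then (z u v : ℝ) * (θA/2) * PA u k else 0)
          + (if u = k then (z u v : ℝ) * (θB/2) * PB v l else 0)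
          + (z u v : ℝ) * (ρ/2) * ((∑ l', (z k l' : ℝ)) * (∑ k', (z k' l : ℝ)) / (N:ℝ)^2) := by
      intro k l
      rw [moranRate]
      generalize (∑ l', (z k l' : ℝ)) = Rk
      generalize (∑ k', (z k' l : ℝ)) = Cl
      by_cases h1 : v = l <;> by_cases h2 : u = k
      · simp only [h1, h2, eq_self_iff_true, if_true, mul_one]
        field_simp; ring
      · simp only [h1, eq_self_iff_true, if_true, if_neg h2, mul_one, mul_zero,
          add_zero, zero_add]
        field_simp; ring
      · simp only [h2, eq_self_iff_true, if_true, if_neg h1, mul_one, mul_zero,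
          add_zero, zero_add]
        field_simp; ring
      · simp only [if_neg h1, if_neg h2, mul_zero, add_zero, zero_add]
        field_simp
    simp only [step, Finset.sum_add_distrib]
    have t1 : ∑ k, ∑ l, (z u v : ℝ)/2 * (z k l : ℝ) = (z u v : ℝ)/2 * (N:ℝ) := by
      simp only [← Finset.mul_sum]; rw [hzR]
    have t2 : ∑ k, ∑ l, (if v = l then (z u v : ℝ) * (θA/2) * PA u k else 0)
        = (z u v : ℝ) * (θA/2) := by
      simp only [Finset.sum_ite_eq, Finset.mem_univ, if_true]
      rw [← Finset.mul_sum, hPA.2 u, mul_one]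
    have t3 : ∑ k, ∑ l, (if u = k then (z u v : ℝ) * (θB/2) * PB v l else 0)
        = (z u v : ℝ) * (θB/2) := by
      rw [Finset.sum_comm]
      simp only [Finset.sum_ite_eq, Finset.mem_univ, if_true]
      rw [← Finset.mul_sum, hPB.2 v, mul_one]
    have t4 : ∑ k, ∑ l, (z u v : ℝ) * (ρ/2)
          * ((∑ l', (z k l' : ℝ)) * (∑ k', (z k' l : ℝ)) / (N:ℝ)^2)
        = (z u v : ℝ) * (ρ/2) := by
      have e : ∀ k : Fin K, ∑ l, (z u v : ℝ) * (ρ/2)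
            * ((∑ l', (z k l' : ℝ)) * (∑ k', (z k' l : ℝ)) / (N:ℝ)^2)
          = ((z u v : ℝ) * (ρ/2) / (N:ℝ)^2 * (∑ l', (z k l' : ℝ)))
              * ∑ l, ∑ k', (z k' l : ℝ) := by
        intro k
        rw [Finset.mul_sum]
        exact Finset.sum_congr rfl fun l _ => by ring
      simp only [e]
      rw [hzC, ← Finset.sum_mul, ← Finset.mul_sum, hzR]
      field_simp
    rw [t1, t2, t3, t4]; ring
  rw [A, B]
  -- rewrite the target sums
  have hSA : ∑ k, (PA k u - if k = u then 1 else 0) * ((z k v : ℝ) / N)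
      = (∑ k, PA k u * (z k v : ℝ))/N - (z u v : ℝ)/N := by
    simp only [sub_mul, Finset.sum_sub_distrib, ite_mul, one_mul, zero_mul,
      Finset.sum_ite_eq', Finset.mem_univ, if_true, Finset.sum_div, mul_div_assoc]
  have hSB : ∑ l, (PB l v - if l = v then 1 else 0) * ((z u l : ℝ) / N)
      = (∑ l, PB l v * (z u l : ℝ))/N - (z u v : ℝ)/N := by
    simp only [sub_mul, Finset.sum_sub_distrib, ite_mul, one_mul, zero_mul,
      Finset.sum_ite_eq', Finset.mem_univ, if_true, Finset.sum_div, mul_div_assoc]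
  rw [hSA, hSB]
  generalize (∑ l, (z u l : ℝ)) = Su
  generalize (∑ k, (z k v : ℝ)) = Sv
  generalize (∑ k, PA k u * (z k v : ℝ)) = SA
  generalize (∑ l, PB l v * (z u l : ℝ)) = SB
  field_simp
  ring
end

section
/- In the two-locus Moran model with generator G, for every N ≥ 1, every z ∈ ℕ^{K×L} with Σ_{ij} z_{ij} = N, every u ∈ [K] and every v ∈ [L], the generator applied to the marginal frequency functions satisfies exactly: G(z ↦ z_{u·}/N)(z) = (θ_A/2) Σ_{k=1}^K (P^A_{ku} − δ_{ku}) z_{k·}/N, and G(z ↦ z_{·v}/N)(z) = (θ_B/2) Σ_{l=1}^L (P^B_{lv} − δ_{lv}) z_{·l}/N; in particular neither reproduction, recombination, nor mutation at the other locus contributes to the drift of the marginal allele frequencies. -/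
open scoped BigOperators

lemma key_sum {K L : ℕ} (N : ℕ) (hN : (N:ℝ) ≠ 0) (θA θB ρ : ℝ)
    (PA : Fin K → Fin K → ℝ) (PB : Fin L → Fin L → ℝ)
    (hPA : ∀ i, ∑ k, PA i k = 1) (hPB : ∀ j, ∑ l, PB j l = 1)
    (z : Fin K → Fin L → ℕ) (hz : (∑ i, ∑ j, (z i j : ℝ)) = N)
    (w : Fin K → ℝ) :
    ∑ i, ∑ j, ∑ k, ∑ l,
        moranRate N K L θA θB ρ PA PB z i j k l * (w k - w i)
      = (N:ℝ) * (θA/2) *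
          ∑ i, ((∑ l, (z i l : ℝ)) / N) * ((∑ k, PA i k * w k) - w i) := by
  have hcol : ∑ l, (∑ k, (z k l : ℝ)) = N := by rw [Finset.sum_comm]; exact hz
  set T : ℝ := ∑ k, (∑ l, (z k l : ℝ)) * w k with hT
  -- Step 1: sum over l
  have step1 : ∀ i j k, ∑ l, moranRate N K L θA θB ρ PA PB z i j k l * (w k - w i)
      = ((z i j : ℝ)/N) * ((w k - w i) *
        ((N:ℝ)^2/2 * ((∑ l, (z k l : ℝ))/N)
          + (N:ℝ) * (θA/2 * PA i k + θB/2 * (if i = k then 1 else 0)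
              + ρ/2 * ((∑ l', (z k l' : ℝ))/N)))) := by
    intro i j k
    have expand : ∀ l, moranRate N K L θA θB ρ PA PB z i j k l * (w k - w i)
        = (((z i j:ℝ)/N) * (w k - w i) * ((N:ℝ)^2/2) / N) * (z k l : ℝ)
          + (((z i j:ℝ)/N) * (w k - w i) * (N:ℝ) * (θA/2 * PA i k)) * (if j = l then 1 else 0)
          + (((z i j:ℝ)/N) * (w k - w i) * (N:ℝ) * (θB/2 * (if i = k then 1 else 0))) * PB j l
          + (((z i j:ℝ)/N) * (w k - w i) * (N:ℝ) * (ρ/2) * ((∑ l', (z k l' : ℝ))/N) / N)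
              * (∑ k', (z k' l : ℝ)) := by
      intro l; simp only [moranRate]; ring
    rw [Finset.sum_congr rfl fun l _ => expand l]
    simp only [Finset.sum_add_distrib, ← Finset.mul_sum]
    rw [hPB j, hcol]
    have h1 : ∑ l, (if j = l then (1:ℝ) else 0) = 1 := by simp
    rw [h1]
    set d : ℝ := (if i = k then (1:ℝ) else 0) with hd
    field_simp
    ring
  -- Step 2: sum over k
  have step2 : ∀ i : Fin K,
      ∑ k, ((w k - w i) *
        ((N:ℝ)^2/2 * ((∑ l, (z k l : ℝ))/N)
          + (N:ℝ) * (θA/2 * PA i k + θB/2 * (if i = k then 1 else 0)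
              + ρ/2 * ((∑ l', (z k l' : ℝ))/N))))
      = ((N:ℝ)/2 + ρ/2) * (T - (N:ℝ) * w i)
        + (N:ℝ) * (θA/2) * ((∑ k, PA i k * w k) - w i) := by
    intro i
    have expand : ∀ k, (w k - w i) *
        ((N:ℝ)^2/2 * ((∑ l, (z k l : ℝ))/N)
          + (N:ℝ) * (θA/2 * PA i k + θB/2 * (if i = k then 1 else 0)
              + ρ/2 * ((∑ l', (z k l' : ℝ))/N)))
        = ((N:ℝ)^2/2/N + (N:ℝ)*(ρ/2)/N) * ((∑ l, (z k l : ℝ)) * w k)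
          + (-(w i) * ((N:ℝ)^2/2/N + (N:ℝ)*(ρ/2)/N)) * (∑ l, (z k l : ℝ))
          + ((N:ℝ) * (θA/2)) * (PA i k * w k)
          + (-((N:ℝ) * (θA/2) * w i)) * PA i k
          + ((N:ℝ) * (θB/2)) * ((if i = k then 1 else 0) * w k)
          + (-((N:ℝ) * (θB/2) * w i)) * (if i = k then 1 else 0) := by
      intro k; ring
    rw [Finset.sum_congr rfl fun k _ => expand k]
    simp only [Finset.sum_add_distrib, ← Finset.mul_sum]
    rw [hPA i, hz, ← hT]
    have h1 : ∑ k, (if i = k then (1:ℝ) else 0) = 1 := by simp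
    have h2 : ∑ k, (if i = k then (1:ℝ) else 0) * w k = w i := by simp
    rw [h1, h2]
    field_simp
    ring
  -- combine
  have step3 : ∀ i : Fin K, ∑ j, ∑ k, ∑ l,
      moranRate N K L θA θB ρ PA PB z i j k l * (w k - w i)
      = ((∑ j, (z i j : ℝ))/N) *
        (((N:ℝ)/2 + ρ/2) * (T - (N:ℝ) * w i)
          + (N:ℝ) * (θA/2) * ((∑ k, PA i k * w k) - w i)) := by
    intro i
    have : ∀ j, ∑ k, ∑ l, moranRate N K L θA θB ρ PA PB z i j k l * (w k - w i)
        = ((z i j : ℝ)/N) *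
          (((N:ℝ)/2 + ρ/2) * (T - (N:ℝ) * w i)
            + (N:ℝ) * (θA/2) * ((∑ k, PA i k * w k) - w i)) := by
      intro j
      rw [Finset.sum_congr rfl fun k _ => step1 i j k, ← Finset.mul_sum, step2 i]
    rw [Finset.sum_congr rfl fun j _ => this j, ← Finset.sum_mul, Finset.sum_div]
  rw [Finset.sum_congr rfl fun i _ => step3 i]
  have expand : ∀ i : Fin K, ((∑ j, (z i j : ℝ))/N) *
      (((N:ℝ)/2 + ρ/2) * (T - (N:ℝ) * w i)
        + (N:ℝ) * (θA/2) * ((∑ k, PA i k * w k) - w i))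
      = (((N:ℝ)/2 + ρ/2) * T / N) * (∑ j, (z i j : ℝ))
        + (-(((N:ℝ)/2 + ρ/2) * ((N:ℝ) / N))) * ((∑ j, (z i j : ℝ)) * w i)
        + ((N:ℝ) * (θA/2)) * (((∑ j, (z i j : ℝ))/N) * ((∑ k, PA i k * w k) - w i)) := by
    intro i; ring
  rw [Finset.sum_congr rfl fun i _ => expand i]
  simp only [Finset.sum_add_distrib, ← Finset.mul_sum]
  rw [hz, ← hT]
  field_simp
  ring

lemma moranRate_transpose {K L : ℕ} (N : ℕ) (θA θB ρ : ℝ)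
    (PA : Fin K → Fin K → ℝ) (PB : Fin L → Fin L → ℝ)
    (z : Fin K → Fin L → ℕ) (i : Fin K) (j : Fin L) (k : Fin K) (l : Fin L) :
    moranRate N L K θB θA ρ PB PA (fun j' i' => z i' j') j i l k
      = moranRate N K L θA θB ρ PA PB z i j k l := by
  simp only [moranRate]; ring

lemma key_sumB {K L : ℕ} (N : ℕ) (hN : (N:ℝ) ≠ 0) (θA θB ρ : ℝ)
    (PA : Fin K → Fin K → ℝ) (PB : Fin L → Fin L → ℝ)
    (hPA : ∀ i, ∑ k, PA i k = 1) (hPB : ∀ j, ∑ l, PB j l = 1)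
    (z : Fin K → Fin L → ℕ) (hz : (∑ i, ∑ j, (z i j : ℝ)) = N)
    (w : Fin L → ℝ) :
    ∑ i, ∑ j, ∑ k, ∑ l,
        moranRate N K L θA θB ρ PA PB z i j k l * (w l - w j)
      = (N:ℝ) * (θB/2) *
          ∑ j, ((∑ k, (z k j : ℝ)) / N) * ((∑ l, PB j l * w l) - w j) := by
  have h := key_sum (K := L) (L := K) N hN θB θA ρ PB PA hPB hPA
    (fun j' i' => z i' j') (by rw [Finset.sum_comm]; exact hz) w
  rw [← h, Finset.sum_comm]
  refine Finset.sum_congr rfl fun j _ => Finset.sum_congr rfl fun i _ => ?_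
  rw [Finset.sum_comm]
  exact Finset.sum_congr rfl fun l _ => Finset.sum_congr rfl fun k _ =>
    (congrArg (· * (w l - w j)) (moranRate_transpose N θA θB ρ PA PB z i j k l)).symm

lemma moranUpdate_transpose {K L : ℕ} (z : Fin K → Fin L → ℕ)
    (i : Fin K) (j : Fin L) (k : Fin K) (l : Fin L) (i' : Fin K) (j' : Fin L) :
    moranUpdate (fun b a => z a b) j i l k j' i' = moranUpdate z i j k l i' j' := by
  simp only [moranUpdate, and_comm]

lemma update_rowsum {K L : ℕ} (z : Fin K → Fin L → ℕ)
    (i : Fin K) (j : Fin L) (k : Fin K) (l : Fin L) (u : Fin K) (hzij : z i j ≠ 0) :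
    (∑ l', ((moranUpdate z i j k l u l' : ℕ) : ℝ))
      = (∑ l', (z u l' : ℝ))
        + ((if k = u then (1:ℝ) else 0) - (if i = u then (1:ℝ) else 0)) := by
  have hcast : ∀ l', ((moranUpdate z i j k l u l' : ℕ) : ℝ)
      = (z u l' : ℝ) - (if u = i ∧ l' = j then (1:ℝ) else 0)
        + (if u = k ∧ l' = l then (1:ℝ) else 0) := by
    intro l'
    have hle : (if u = i ∧ l' = j then 1 else 0) ≤ z u l' := by
      split_ifs with h
      · obtain ⟨h1, h2⟩ := h; subst h1; subst h2; omega
      · omega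
    simp only [moranUpdate]
    push_cast [Nat.cast_sub hle]
    split_ifs <;> norm_num
  rw [Finset.sum_congr rfl fun l' _ => hcast l']
  simp only [Finset.sum_add_distrib, Finset.sum_sub_distrib]
  have h1 : ∑ l', (if u = i ∧ l' = j then (1:ℝ) else 0) = (if i = u then (1:ℝ) else 0) := by
    simp [ite_and, eq_comm]
  have h2 : ∑ l', (if u = k ∧ l' = l then (1:ℝ) else 0) = (if k = u then (1:ℝ) else 0) := by
    simp [ite_and, eq_comm]
  rw [h1, h2]; ring


/-- Exact action of the Moran generator on the marginal allele frequencies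
`z ↦ z_{u·}/N` and `z ↦ z_{·v}/N`: only mutation at the corresponding locus
contributes to the drift. -/
theorem moranGen_marginals (N K L : ℕ) (hN : 1 ≤ N) (hK : 1 ≤ K) (hL : 1 ≤ L)
    (θA θB ρ : ℝ) (hθA : 0 ≤ θA) (hθB : 0 ≤ θB) (hρ : 0 ≤ ρ)
    (PA : Fin K → Fin K → ℝ) (PB : Fin L → Fin L → ℝ)
    (hPA : (∀ i k, 0 ≤ PA i k) ∧ ∀ i, ∑ k, PA i k = 1)
    (hPB : (∀ j l, 0 ≤ PB j l) ∧ ∀ j, ∑ l, PB j l = 1)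
    (z : Fin K → Fin L → ℕ) (hz : ∑ i, ∑ j, z i j = N)
    (u : Fin K) (v : Fin L) :
    moranGen N K L θA θB ρ PA PB (fun z' => (∑ l, (z' u l : ℝ)) / N) z
        = θA / 2 * ∑ k, (PA k u - if k = u then 1 else 0) * ((∑ l, (z k l : ℝ)) / N)
      ∧ moranGen N K L θA θB ρ PA PB (fun z' => (∑ k, (z' k v : ℝ)) / N) z
        = θB / 2 * ∑ l, (PB l v - if l = v then 1 else 0) * ((∑ k, (z k l : ℝ)) / N) := by
  obtain ⟨-, hPA1⟩ := hPA
  obtain ⟨-, hPB1⟩ := hPB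
  have hN' : (N : ℝ) ≠ 0 := Nat.cast_ne_zero.mpr (by omega)
  have hzR : (∑ i, ∑ j, (z i j : ℝ)) = N := by
    have := congrArg (fun n : ℕ => (n : ℝ)) hz
    push_cast at this
    exact this
  constructor
  · -- locus A
    have hgen : moranGen N K L θA θB ρ PA PB (fun z' => (∑ l, (z' u l : ℝ)) / N) z
        = (∑ i, ∑ j, ∑ k, ∑ l, moranRate N K L θA θB ρ PA PB z i j k l *
            ((fun k : Fin K => if k = u then (1:ℝ) else 0) k
              - (fun k : Fin K => if k = u then (1:ℝ) else 0) i)) / N := by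
      simp only [moranGen]
      rw [eq_div_iff hN', Finset.sum_mul]
      refine Finset.sum_congr rfl fun i _ => ?_
      rw [Finset.sum_mul]
      refine Finset.sum_congr rfl fun j _ => ?_
      rw [Finset.sum_mul]
      refine Finset.sum_congr rfl fun k _ => ?_
      rw [Finset.sum_mul]
      refine Finset.sum_congr rfl fun l _ => ?_
      by_cases h0 : z i j = 0
      · simp [moranRate, h0]
      · rw [update_rowsum z i j k l u h0]
        field_simp
        ring
    rw [hgen, key_sum N hN' θA θB ρ PA PB hPA1 hPB1 z hzR
      (fun k : Fin K => if k = u then (1:ℝ) else 0)]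
    have hS : (∑ i, ((∑ l, (z i l : ℝ)) / N) *
          ((∑ k, PA i k * (if k = u then (1:ℝ) else 0)) - (if i = u then (1:ℝ) else 0)))
        = ∑ k, (PA k u - if k = u then (1:ℝ) else 0) * ((∑ l, (z k l : ℝ)) / N) := by
      refine Finset.sum_congr rfl fun i _ => ?_
      have h1 : (∑ k, PA i k * (if k = u then (1:ℝ) else 0)) = PA i u := by
        simp [mul_ite]
      rw [h1]; ring
    rw [hS]
    field_simp
  · -- locus B
    have hcol : ∀ (i : Fin K) (j : Fin L) (k : Fin K) (l : Fin L), z i j ≠ 0 →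
        (∑ k', ((moranUpdate z i j k l k' v : ℕ) : ℝ))
          = (∑ k', (z k' v : ℝ))
            + ((if l = v then (1:ℝ) else 0) - (if j = v then (1:ℝ) else 0)) := by
      intro i j k l h0
      have h := update_rowsum (K := L) (L := K) (fun b a => z a b) j i l k v h0
      simp only [moranUpdate_transpose] at h
      exact h
    have hgen : moranGen N K L θA θB ρ PA PB (fun z' => (∑ k, (z' k v : ℝ)) / N) z
        = (∑ i, ∑ j, ∑ k, ∑ l, moranRate N K L θA θB ρ PA PB z i j k l *
            ((fun l : Fin L => if l = v then (1:ℝ) else 0) l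
              - (fun l : Fin L => if l = v then (1:ℝ) else 0) j)) / N := by
      simp only [moranGen]
      rw [eq_div_iff hN', Finset.sum_mul]
      refine Finset.sum_congr rfl fun i _ => ?_
      rw [Finset.sum_mul]
      refine Finset.sum_congr rfl fun j _ => ?_
      rw [Finset.sum_mul]
      refine Finset.sum_congr rfl fun k _ => ?_
      rw [Finset.sum_mul]
      refine Finset.sum_congr rfl fun l _ => ?_
      by_cases h0 : z i j = 0
      · simp [moranRate, h0]
      · rw [hcol i j k l h0]
        field_simp
        ring
    rw [hgen, key_sumB N hN' θA θB ρ PA PB hPA1 hPB1 z hzR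
      (fun l : Fin L => if l = v then (1:ℝ) else 0)]
    have hS : (∑ j, ((∑ k, (z k j : ℝ)) / N) *
          ((∑ l, PB j l * (if l = v then (1:ℝ) else 0)) - (if j = v then (1:ℝ) else 0)))
        = ∑ l, (PB l v - if l = v then (1:ℝ) else 0) * ((∑ k, (z k l : ℝ)) / N) := by
      refine Finset.sum_congr rfl fun j _ => ?_
      have h1 : (∑ l, PB j l * (if l = v then (1:ℝ) else 0)) = PB j v := by
        simp [mul_ite]
      rw [h1]; ring
    rw [hS]
    field_simp
end

section
/- In the two-locus Moran model with generator G, define for (u,v) ∈ [K]×[L] the linkage-disequilibrium function f_{uv}(z) = z_{uv}/N − (z_{u·}/N)(z_{·v}/N), and write d_{uv}(z) = f_{uv}(z). Then there exists a constant C, depending only on K and L, such that for all N ≥ 1 and all z ∈ ℕ^{K×L} with Σ_{ij} z_{ij} = N: | G(f_{uv})(z) + ((ρ/2) + 1) d_{uv}(z) − (θ_A/2) Σ_{k=1}^K (P^A_{ku} − δ_{ku}) d_{kv}(z) − (θ_B/2) Σ_{l=1}^L (P^B_{lv} − δ_{lv}) d_{ul}(z) | ≤ C (1 + θ_A + θ_B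 + ρ)/N. -/
open scoped BigOperators

/-- The linkage-disequilibrium coordinate `d_{uv}(z) = z_{uv}/N − (z_{u·}/N)(z_{·v}/N)`. -/
noncomputable def moranLD (N : ℕ) {K L : ℕ} (z : Fin K → Fin L → ℕ)
    (u : Fin K) (v : Fin L) : ℝ :=
  (z u v : ℝ) / N - ((∑ l, (z u l : ℝ)) / N) * ((∑ k, (z k v : ℝ)) / N)

lemma moran_update_cast {K L : ℕ} (z : Fin K → Fin L → ℕ) (i k : Fin K) (j l : Fin L)
    (h : 1 ≤ z i j) (a : Fin K) (b : Fin L) :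
    ((moranUpdate z i j k l a b : ℝ))
      = (z a b : ℝ) + (if a = k ∧ b = l then 1 else 0) - (if a = i ∧ b = j then 1 else 0) := by
  unfold moranUpdate
  by_cases h1 : a = i ∧ b = j
  · have hz : 1 ≤ z a b := by rw [h1.1, h1.2]; exact h
    by_cases h2 : a = k ∧ b = l
    · rw [if_pos h1, if_pos h2, if_pos h1, if_pos h2, Nat.sub_add_cancel hz]; ring
    · rw [if_pos h1, if_neg h2, if_pos h1, if_neg h2, Nat.add_zero, Nat.cast_sub hz]; ring
  · by_cases h2 : a = k ∧ b = l
    · rw [if_pos h2, if_neg h1, if_neg h1, if_pos h2, Nat.sub_zero]; push_cast; ring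
    · rw [if_neg h2, if_neg h1, if_neg h1, if_neg h2, Nat.sub_zero]; push_cast; ring

lemma moran_update_row {K L : ℕ} (z : Fin K → Fin L → ℕ) (i k : Fin K) (j l : Fin L)
    (h : 1 ≤ z i j) (a : Fin K) :
    (∑ b, (moranUpdate z i j k l a b : ℝ))
      = (∑ b, (z a b : ℝ)) + (if a = k then 1 else 0) - (if a = i then 1 else 0) := by
  simp only [moran_update_cast z i k j l h a]
  rw [Finset.sum_sub_distrib, Finset.sum_add_distrib]
  congr 1
  · congr 1
    by_cases hk : a = k <;> simp [hk]
  · by_cases hi : a = i <;> simp [hi]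

lemma moran_update_col {K L : ℕ} (z : Fin K → Fin L → ℕ) (i k : Fin K) (j l : Fin L)
    (h : 1 ≤ z i j) (b : Fin L) :
    (∑ a, (moranUpdate z i j k l a b : ℝ))
      = (∑ a, (z a b : ℝ)) + (if b = l then 1 else 0) - (if b = j then 1 else 0) := by
  simp only [moran_update_cast z i k j l h]
  rw [Finset.sum_sub_distrib, Finset.sum_add_distrib]
  congr 1
  · congr 1
    by_cases hk : b = l <;> simp [hk]
  · by_cases hi : b = j <;> simp [hi]

lemma moranLD_update (N : ℕ) (hN : 0 < N) {K L : ℕ} (z : Fin K → Fin L → ℕ)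
    (i k u : Fin K) (j l v : Fin L) (h : 1 ≤ z i j) :
    moranLD N (moranUpdate z i j k l) u v
      = moranLD N z u v
        + (1/(N:ℝ)) * ((if u = k then 1 else 0) * (if v = l then 1 else 0)
             - (if u = i then 1 else 0) * (if v = j then 1 else 0)
             - ((∑ l', (z u l' : ℝ))/N) * ((if v = l then 1 else 0) - (if v = j then 1 else 0))
             - ((∑ k', (z k' v : ℝ))/N) * ((if u = k then 1 else 0) - (if u = i then 1 else 0)))
        - (1/(N:ℝ)^2) * (((if u = k then 1 else 0) - (if u = i then 1 else 0))
             * ((if v = l then 1 else 0) - (if v = j then 1 else 0))) := by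
  have hn : (N:ℝ) ≠ 0 := by positivity
  unfold moranLD
  rw [moran_update_cast z i k j l h, moran_update_row z i k j l h, moran_update_col z i k j l h]
  have hkl : (if u = k ∧ v = l then (1:ℝ) else 0) = (if u = k then 1 else 0) * (if v = l then 1 else 0) := by
    by_cases h1 : u = k <;> by_cases h2 : v = l <;> simp [h1, h2]
  have hij : (if u = i ∧ v = j then (1:ℝ) else 0) = (if u = i then 1 else 0) * (if v = j then 1 else 0) := by
    by_cases h1 : u = i <;> by_cases h2 : v = j <;> simp [h1, h2]
  rw [hkl, hij]
  field_simp
  ring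

lemma moran_if_push_add (c : Prop) [Decidable c] (a b : ℝ) :
    (if c then a + b else 0) = (if c then a else 0) + (if c then b else 0) := by
  split <;> simp

lemma moran_if_push_sub (c : Prop) [Decidable c] (a b : ℝ) :
    (if c then a - b else 0) = (if c then a else 0) - (if c then b else 0) := by
  split <;> simp

lemma moran_sum_if_const {n : ℕ} (c : Prop) [Decidable c] (f : Fin n → ℝ) :
    (∑ x, if c then f x else 0) = if c then ∑ x, f x else 0 := by
  split <;> simp

set_option maxHeartbeats 2000000 in
lemma moran_sum_eval (K L N : ℕ) (hN : 1 ≤ N) (θA θB ρ : ℝ)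
    (PA : Fin K → Fin K → ℝ) (PB : Fin L → Fin L → ℝ)
    (hPA1 : ∀ i, ∑ k, PA i k = 1) (hPB1 : ∀ j, ∑ l, PB j l = 1)
    (z : Fin K → Fin L → ℕ) (hz : (∑ i, ∑ j, (z i j : ℝ)) = N)
    (hz' : (∑ j : Fin L, ∑ i : Fin K, (z i j : ℝ)) = N)
    (u : Fin K) (v : Fin L) :
    (∑ i, ∑ j, ∑ k, ∑ l,
      ((z i j : ℝ)/N) * (((N:ℝ)^2/2) * ((z k l : ℝ)/N)
        + N * (θA/2 * PA i k * (if j = l then 1 else 0)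
          + θB/2 * PB j l * (if i = k then 1 else 0)
          + ρ/2 * ((∑ l', (z k l' : ℝ))/N) * ((∑ k', (z k' l : ℝ))/N)))
      * ((1/(N:ℝ)) * ((if u = k then (1:ℝ) else 0) * (if v = l then 1 else 0)
             - (if u = i then 1 else 0) * (if v = j then 1 else 0)
             - ((∑ l', (z u l' : ℝ))/N) * ((if v = l then 1 else 0) - (if v = j then 1 else 0))
             - ((∑ k', (z k' v : ℝ))/N) * ((if u = k then 1 else 0) - (if u = i then 1 else 0)))
        - (1/(N:ℝ)^2) * (((if u = k then 1 else 0) - (if u = i then 1 else 0))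
             * ((if v = l then 1 else 0) - (if v = j then 1 else 0)))))
    = -(ρ/2+1) * moranLD N z u v
      + θA/2 * (∑ k, (PA k u - if k = u then 1 else 0) * moranLD N z k v)
      + θB/2 * (∑ l, (PB l v - if l = v then 1 else 0) * moranLD N z u l)
      - ρ/(2*(N:ℝ)) * moranLD N z u v := by
  simp only [moranLD, mul_add, add_mul, mul_sub, sub_mul, Finset.sum_add_distrib,
    Finset.sum_sub_distrib, mul_ite, ite_mul, mul_one, mul_zero, one_mul, zero_mul,
    moran_if_push_add, moran_if_push_sub, moran_sum_if_const,
    Finset.sum_ite_eq, Finset.sum_ite_eq', Finset.mem_univ, if_true, Finset.sum_const_zero,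
    ← Finset.sum_mul, ← Finset.mul_sum, ← Finset.sum_div, hz, hz', hPA1, hPB1]
  have hn : (N:ℝ) ≠ 0 := by positivity
  have hL1 : (∑ i : Fin K, (z i v : ℝ) / N * (N * (θA / 2 * PA i u)))
      = (N:ℝ) * (θA/2) / N * ∑ x, PA x u * (z x v : ℝ) := by
    conv_rhs => rw [Finset.mul_sum]
    exact Finset.sum_congr rfl fun x _ => by ring
  have hL2 : (∑ i : Fin L, (z u i : ℝ) / N * (N * (θB / 2 * PB i v)))
      = (N:ℝ) * (θB/2) / N * ∑ x, PB x v * (z u x : ℝ) := by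
    conv_rhs => rw [Finset.mul_sum]
    exact Finset.sum_congr rfl fun x _ => by ring
  have hL3 : (∑ i : Fin K, ∑ i_1 : Fin L, (z i i_1 : ℝ) / N * (N * (θB / 2 * PB i_1 v)))
      = (N:ℝ) * (θB/2) / N * ∑ x, PB x v * (∑ k, (z k x : ℝ)) := by
    rw [Finset.sum_comm]
    conv_rhs => rw [Finset.mul_sum]
    refine Finset.sum_congr rfl fun x _ => ?_
    conv_rhs => rw [Finset.mul_sum, Finset.mul_sum]
    exact Finset.sum_congr rfl fun y _ => by ring
  have hL4 : (∑ i : Fin K, (∑ i_1 : Fin L, (z i i_1 : ℝ)) / N * (N * (θA / 2 * PA i u)))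
      = (N:ℝ) * (θA/2) / N * ∑ x, PA x u * (∑ l, (z x l : ℝ)) := by
    conv_rhs => rw [Finset.mul_sum]
    exact Finset.sum_congr rfl fun x _ => by ring
  have hR1 : (∑ x, PA x u * ((z x v : ℝ) / N)) = (∑ x, PA x u * (z x v : ℝ)) / N := by
    conv_rhs => rw [Finset.sum_div]
    exact Finset.sum_congr rfl fun x _ => by ring
  have hR2 : (∑ x, PA x u * ((∑ l, (z x l : ℝ)) / N * ((∑ k', (z k' v : ℝ)) / N)))
      = (∑ x, PA x u * (∑ l, (z x l : ℝ))) * ((∑ k', (z k' v : ℝ))) / N^2 := by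
    conv_rhs => rw [Finset.sum_mul, Finset.sum_div]
    exact Finset.sum_congr rfl fun x _ => by ring
  have hR3 : (∑ x, PB x v * ((z u x : ℝ) / N)) = (∑ x, PB x v * (z u x : ℝ)) / N := by
    conv_rhs => rw [Finset.sum_div]
    exact Finset.sum_congr rfl fun x _ => by ring
  have hR4 : (∑ x, PB x v * ((∑ l', (z u l' : ℝ)) / N * ((∑ k, (z k x : ℝ)) / N)))
      = (∑ x, PB x v * (∑ k, (z k x : ℝ))) * ((∑ l', (z u l' : ℝ))) / N^2 := by
    conv_rhs => rw [Finset.sum_mul, Finset.sum_div]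
    exact Finset.sum_congr rfl fun x _ => by ring
  rw [hL1, hL2, hL3, hL4, hR1, hR2, hR3, hR4]
  field_simp
  ring

lemma moran_summand_eq (N K L : ℕ) (hN : 1 ≤ N) (θA θB ρ : ℝ)
    (PA : Fin K → Fin K → ℝ) (PB : Fin L → Fin L → ℝ)
    (z : Fin K → Fin L → ℕ) (u : Fin K) (v : Fin L)
    (i k : Fin K) (j l : Fin L) :
    moranRate N K L θA θB ρ PA PB z i j k l
      * (moranLD N (moranUpdate z i j k l) u v - moranLD N z u v)
    = ((z i j : ℝ)/N) * (((N:ℝ)^2/2) * ((z k l : ℝ)/N)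
        + N * (θA/2 * PA i k * (if j = l then 1 else 0)
          + θB/2 * PB j l * (if i = k then 1 else 0)
          + ρ/2 * ((∑ l', (z k l' : ℝ))/N) * ((∑ k', (z k' l : ℝ))/N)))
      * ((1/(N:ℝ)) * ((if u = k then (1:ℝ) else 0) * (if v = l then 1 else 0)
             - (if u = i then 1 else 0) * (if v = j then 1 else 0)
             - ((∑ l', (z u l' : ℝ))/N) * ((if v = l then 1 else 0) - (if v = j then 1 else 0))
             - ((∑ k', (z k' v : ℝ))/N) * ((if u = k then 1 else 0) - (if u = i then 1 else 0)))
        - (1/(N:ℝ)^2) * (((if u = k then 1 else 0) - (if u = i then 1 else 0))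
             * ((if v = l then 1 else 0) - (if v = j then 1 else 0)))) := by
  by_cases h0 : z i j = 0
  · simp [moranRate, h0]
  · rw [moranLD_update N hN z i k u j l v (Nat.one_le_iff_ne_zero.mpr h0)]
    unfold moranRate
    ring
/-- The drift of each linkage-disequilibrium coordinate under the Moran generator:
up to an error of order `(1 + θ_A + θ_B + ρ)/N` with constant depending only on
`K` and `L`, `G d_{uv} = −(ρ/2 + 1) d_{uv} + (θ_A/2) Σ_k (P^A_{ku} − δ_{ku}) d_{kv}
+ (θ_B/2) Σ_l (P^B_{lv} − δ_{lv}) d_{ul}`. -/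
theorem moranGen_LD_drift (K L : ℕ) (hK : 1 ≤ K) (hL : 1 ≤ L) :
    ∃ C : ℝ, 0 < C ∧
      ∀ (θA θB ρ : ℝ), 0 ≤ θA → 0 ≤ θB → 0 ≤ ρ →
      ∀ (PA : Fin K → Fin K → ℝ) (PB : Fin L → Fin L → ℝ),
        ((∀ i k, 0 ≤ PA i k) ∧ ∀ i, ∑ k, PA i k = 1) →
        ((∀ j l, 0 ≤ PB j l) ∧ ∀ j, ∑ l, PB j l = 1) →
      ∀ N : ℕ, 1 ≤ N →
      ∀ z : Fin K → Fin L → ℕ, ∑ i, ∑ j, z i j = N →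
      ∀ (u : Fin K) (v : Fin L),
        |moranGen N K L θA θB ρ PA PB (fun z' => moranLD N z' u v) z
            + (ρ / 2 + 1) * moranLD N z u v
            - θA / 2 * ∑ k, (PA k u - if k = u then 1 else 0) * moranLD N z k v
            - θB / 2 * ∑ l, (PB l v - if l = v then 1 else 0) * moranLD N z u l|
          ≤ C * (1 + θA + θB + ρ) / N := by
  refine ⟨1, one_pos, ?_⟩
  rintro θA θB ρ hθA hθB hρ PA PB ⟨hPA0, hPA1⟩ ⟨hPB0, hPB1⟩ N hN z hz u v
  have hn0 : (0:ℝ) < (N:ℝ) := by exact_mod_cast Nat.lt_of_lt_of_le Nat.zero_lt_one hN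
  have hn : (N:ℝ) ≠ 0 := ne_of_gt hn0
  have hzR : (∑ i, ∑ j, (z i j : ℝ)) = N := by exact_mod_cast congrArg (Nat.cast : ℕ → ℝ) hz
  have hzR' : (∑ j : Fin L, ∑ i : Fin K, (z i j : ℝ)) = N := by
    rw [Finset.sum_comm]; exact hzR
  have hG : moranGen N K L θA θB ρ PA PB (fun z' => moranLD N z' u v) z
      = -(ρ/2+1) * moranLD N z u v
        + θA/2 * (∑ k, (PA k u - if k = u then 1 else 0) * moranLD N z k v)
        + θB/2 * (∑ l, (PB l v - if l = v then 1 else 0) * moranLD N z u l)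
        - ρ/(2*(N:ℝ)) * moranLD N z u v := by
    rw [← moran_sum_eval K L N hN θA θB ρ PA PB hPA1 hPB1 z hzR hzR' u v]
    unfold moranGen
    exact Finset.sum_congr rfl fun i _ => Finset.sum_congr rfl fun j _ =>
      Finset.sum_congr rfl fun k _ => Finset.sum_congr rfl fun l _ =>
        moran_summand_eq N K L hN θA θB ρ PA PB z u v i k j l
  have hmain : moranGen N K L θA θB ρ PA PB (fun z' => moranLD N z' u v) z
            + (ρ / 2 + 1) * moranLD N z u v
            - θA / 2 * ∑ k, (PA k u - if k = u then 1 else 0) * moranLD N z k v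
            - θB / 2 * ∑ l, (PB l v - if l = v then 1 else 0) * moranLD N z u l
      = -(ρ/(2*(N:ℝ))) * moranLD N z u v := by
    rw [hG]; ring
  rw [hmain]
  -- bound |moranLD| ≤ 1
  have hzuv : (z u v : ℝ) ≤ N := by
    have : z u v ≤ ∑ i, ∑ j, z i j := by
      calc z u v ≤ ∑ j, z u j := Finset.single_le_sum (fun _ _ => Nat.zero_le _) (Finset.mem_univ v)
      _ ≤ ∑ i, ∑ j, z i j := Finset.single_le_sum (f := fun i => ∑ j, z i j) (fun _ _ => Nat.zero_le _) (Finset.mem_univ u)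
    rw [hz] at this; exact_mod_cast this
  have hru : (∑ l, (z u l : ℝ)) ≤ N := by
    have : ∑ l, z u l ≤ ∑ i, ∑ j, z i j :=
      Finset.single_le_sum (f := fun i => ∑ j, z i j) (fun _ _ => Nat.zero_le _) (Finset.mem_univ u)
    rw [hz] at this; push_cast; exact_mod_cast this
  have hcv : (∑ k, (z k v : ℝ)) ≤ N := by
    have : ∑ k, z k v ≤ ∑ i, ∑ j, z i j :=
      Finset.sum_le_sum fun i _ =>
        Finset.single_le_sum (fun _ _ => Nat.zero_le _) (Finset.mem_univ v)
    rw [hz] at this; push_cast; exact_mod_cast this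
  have hzuv0 : (0:ℝ) ≤ (z u v : ℝ) := Nat.cast_nonneg _
  have hru0 : (0:ℝ) ≤ ∑ l, (z u l : ℝ) := Finset.sum_nonneg fun _ _ => Nat.cast_nonneg _
  have hcv0 : (0:ℝ) ≤ ∑ k, (z k v : ℝ) := Finset.sum_nonneg fun _ _ => Nat.cast_nonneg _
  have hA1 : (z u v : ℝ)/N ≤ 1 := by rw [div_le_one hn0]; exact hzuv
  have hA0 : (0:ℝ) ≤ (z u v : ℝ)/N := by positivity
  have hBa : (∑ l, (z u l : ℝ))/N ≤ 1 := by rw [div_le_one hn0]; exact hru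
  have hBb : (∑ k, (z k v : ℝ))/N ≤ 1 := by rw [div_le_one hn0]; exact hcv
  have hBa0 : (0:ℝ) ≤ (∑ l, (z u l : ℝ))/N := by positivity
  have hBb0 : (0:ℝ) ≤ (∑ k, (z k v : ℝ))/N := by positivity
  have hLD : |moranLD N z u v| ≤ 1 := by
    rw [moranLD, abs_le]
    constructor <;> nlinarith
  calc |(-(ρ/(2*(N:ℝ)))) * moranLD N z u v|
      = ρ/(2*(N:ℝ)) * |moranLD N z u v| := by
        rw [abs_mul, abs_neg, abs_of_nonneg (by positivity)]
    _ ≤ ρ/(2*(N:ℝ)) * 1 := mul_le_mul_of_nonneg_left hLD (by positivity)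
    _ ≤ 1 * (1 + θA + θB + ρ) / N := by
        rw [mul_one, one_mul, div_le_div_iff₀ (by positivity) hn0]
        nlinarith
end
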